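/- For all nonnegative integers r and m, one has ∫_{ℂ⁴} |z₁^r · (z₁z₄ − z₂z₃)^m|² · e^{−π(|z₁|² + |z₂|² + |z₃|² + |z₄|²)} dz₁ dz₂ dz₃ dz₄ = m! · (r+m+1)! / ((r+1) · π^{r+2m}). -/

import Mathlib

open MeasureTheory

open Real Set Finset
open scoped ComplexConjugate

noncomputable section StmtAux

/-- The basic monomial Gaussian function on `ℂ`. -/
def gg (a b : ℕ) : ℂ → ℂ :=
  fun z => z ^ a * (conj z) ^ b * (Real.exp (-Real.pi * ‖z‖ ^ 2) : ℝ)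

/-- Its integral value. -/
def Ival (a b : ℕ) : ℂ := if a = b then ((a.factorial : ℂ) / (Real.pi : ℂ) ^ a) else 0

lemma exp_sq_integrable {c : ℝ} (hc : 0 < c) :
    Integrable (fun z : ℂ => Real.exp (-c * ‖z‖ ^ 2)) := by
  rw [← (Complex.volume_preserving_equiv_real_prod.symm).integrable_comp_emb
    Complex.measurableEquivRealProd.symm.measurableEmbedding]
  have : ((fun z : ℂ => Real.exp (-c * ‖z‖ ^ 2)) ∘ Complex.measurableEquivRealProd.symm)
      = fun p : ℝ × ℝ => Real.exp (-c * p.1 ^ 2) * Real.exp (-c * p.2 ^ 2) := by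
    ext p
    rw [Function.comp_apply, Complex.measurableEquivRealProd_symm_apply, ← Real.exp_add,
      Complex.sq_norm, Complex.normSq_apply]
    norm_num
    ring_nf
  rw [this]
  exact (integrable_exp_neg_mul_sq hc).mul_prod (integrable_exp_neg_mul_sq hc)

lemma gg_cont (a b : ℕ) : Continuous (gg a b) := by
  refine ((continuous_pow a).mul (Complex.continuous_conj.pow b)).mul
    (Complex.continuous_ofReal.comp (Real.continuous_exp.comp ?_))
  exact (continuous_const.mul ((continuous_norm).pow 2))

lemma gg_norm (a b : ℕ) (z : ℂ) :
    ‖gg a b z‖ = ‖z‖ ^ (a + b) * Real.exp (-Real.pi * ‖z‖ ^ 2) := by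
  rw [gg, norm_mul, norm_mul, norm_pow, norm_pow,
    Complex.norm_conj, Complex.norm_real, Real.norm_eq_abs, abs_of_nonneg (Real.exp_pos _).le,
    ← pow_add]

lemma gg_integrable (a b : ℕ) : Integrable (gg a b) := by
  refine Integrable.mono' (((exp_sq_integrable (c := Real.pi / 2) (by positivity)).const_mul
    (((a + b).factorial : ℝ) * Real.exp (1 / (2 * Real.pi))))) (gg_cont a b).aestronglyMeasurable
    (Filter.Eventually.of_forall fun z => ?_)
  have hpi := Real.pi_pos
  set t := ‖z‖ with ht
  have ht0 : 0 ≤ t := norm_nonneg z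
  rw [gg_norm]
  have h2 : t ^ (a + b) ≤ ((a + b).factorial : ℝ) * Real.exp t := by
    have h3 : t ^ (a + b) / ((a + b).factorial : ℝ) ≤ Real.exp t :=
      le_trans (Finset.single_le_sum (f := fun i => t ^ i / (i.factorial : ℝ))
        (fun i _ => by positivity) (Finset.self_mem_range_succ (a + b)))
        (Real.sum_le_exp_of_nonneg ht0 (a + b + 1))
    have hf : (0:ℝ) < ((a + b).factorial : ℝ) := by positivity
    calc t ^ (a+b) = ((a+b).factorial : ℝ) * (t ^ (a+b) / ((a+b).factorial : ℝ)) := by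
          field_simp
      _ ≤ _ := by nlinarith
  calc t ^ (a + b) * Real.exp (-Real.pi * t ^ 2)
      ≤ ((a + b).factorial : ℝ) * Real.exp t * Real.exp (-Real.pi * t ^ 2) := by
        apply mul_le_mul_of_nonneg_right h2 (Real.exp_pos _).le
    _ = ((a + b).factorial : ℝ) * Real.exp (t - Real.pi * t ^ 2) := by
        rw [mul_assoc, ← Real.exp_add]; ring_nf
    _ ≤ ((a + b).factorial : ℝ) * Real.exp (1 / (2 * Real.pi) - (Real.pi / 2) * t ^ 2) := by
        apply mul_le_mul_of_nonneg_left _ (by positivity)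
        apply Real.exp_le_exp.mpr
        have hinv : (2 * Real.pi) * (1 / (2 * Real.pi)) = 1 := by field_simp
        nlinarith [sq_nonneg (Real.pi * t - 1), hpi, hinv]
    _ = ((a + b).factorial : ℝ) * Real.exp (1 / (2 * Real.pi)) *
          Real.exp (-(Real.pi / 2) * t ^ 2) := by
        rw [mul_assoc, ← Real.exp_add]; ring_nf

lemma polar_point (a b : ℕ) (p : ℝ × ℝ) (hp1 : 0 < p.1) :
    p.1 • gg a b (Complex.polarCoord.symm p)
      = ((p.1 ^ (a + b + 1) * Real.exp (-Real.pi * p.1 ^ 2) : ℝ) : ℂ)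
        * Complex.exp (((a : ℂ) - b) * p.2 * Complex.I) := by
  have hz : (Complex.polarCoord.symm p : ℂ) = (p.1 : ℂ) * Complex.exp (↑p.2 * Complex.I) := by
    rw [Complex.polarCoord_symm_apply, Complex.exp_mul_I]
    push_cast; ring
  have habs : ‖Complex.polarCoord.symm p‖ = p.1 := by
    rw [Complex.norm_polarCoord_symm, abs_of_pos hp1]
  have hconj : conj (Complex.polarCoord.symm p : ℂ)
      = (p.1 : ℂ) * Complex.exp (-(↑p.2 * Complex.I)) := by
    rw [hz, map_mul, Complex.conj_ofReal, ← Complex.exp_conj, map_mul, Complex.conj_ofReal,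
      Complex.conj_I, mul_neg]
  simp only [gg, habs, hconj]
  rw [hz, mul_pow, mul_pow, ← Complex.exp_nat_mul, ← Complex.exp_nat_mul,
    Complex.real_smul]
  push_cast
  rw [show ((a:ℂ) - b) * p.2 * Complex.I = (a:ℂ) * (↑p.2 * Complex.I)
      + (b:ℂ) * -(↑p.2 * Complex.I) by ring, Complex.exp_add]
  ring

lemma angular (a b : ℕ) :
    ∫ θ in Ioo (-Real.pi) Real.pi, Complex.exp (((a : ℂ) - b) * θ * Complex.I)
      = if a = b then ((2 * Real.pi : ℝ) : ℂ) else 0 := by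
  rcases eq_or_ne a b with h | h
  · subst h
    rw [if_pos rfl]
    simp only [sub_self, zero_mul, Complex.exp_zero]
    rw [setIntegral_const, Real.volume_real_Ioo_of_le (by linarith [Real.pi_pos] : -Real.pi ≤ Real.pi),
      Complex.real_smul, mul_one]
    push_cast; ring
  · rw [if_neg h]
    have hc : ((a : ℂ) - b) * Complex.I ≠ 0 := by
      apply mul_ne_zero _ Complex.I_ne_zero
      rw [sub_ne_zero]
      exact_mod_cast fun hh => h (Nat.cast_injective hh)
    have : ∀ θ : ℝ, ((a : ℂ) - b) * θ * Complex.I = (((a : ℂ) - b) * Complex.I) * θ := by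
      intro θ; ring
    simp_rw [this]
    rw [← MeasureTheory.integral_Ioc_eq_integral_Ioo,
      ← intervalIntegral.integral_of_le (by linarith [Real.pi_pos] : -Real.pi ≤ Real.pi),
      integral_exp_mul_complex hc]
    rw [div_eq_zero_iff]
    left
    rw [sub_eq_zero, Complex.exp_eq_exp_iff_exists_int]
    exact ⟨(a : ℤ) - b, by push_cast; ring⟩

lemma radial (a : ℕ) :
    ∫ ρ in Ioi (0:ℝ), ρ ^ (2 * a + 1) * Real.exp (-Real.pi * ρ ^ 2)
      = (a.factorial : ℝ) / (2 * Real.pi ^ (a + 1)) := by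
  have h1 : ∀ ρ ∈ Ioi (0:ℝ), ρ ^ (2 * a + 1) * Real.exp (-Real.pi * ρ ^ 2)
      = ρ ^ ((2 * a + 1 : ℕ) : ℝ) * Real.exp (-Real.pi * ρ ^ (2:ℝ)) := by
    intro ρ hρ
    rw [Real.rpow_natCast, Real.rpow_two]
  rw [setIntegral_congr_fun measurableSet_Ioi h1,
    integral_rpow_mul_exp_neg_mul_rpow (by norm_num) (by push_cast; linarith) Real.pi_pos]
  have h2 : (((2 * a + 1 : ℕ) : ℝ) + 1) / 2 = (a : ℝ) + 1 := by push_cast; ring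
  rw [h2]
  rw [show -(((2 * a + 1 : ℕ) : ℝ) + 1) / 2 = -(((a:ℕ) + 1 : ℕ) : ℝ) by push_cast; ring]
  rw [Real.rpow_neg Real.pi_pos.le, Real.rpow_natCast,
    Real.Gamma_nat_eq_factorial]
  have hp : (0:ℝ) < Real.pi ^ (a+1) := by positivity
  rw [eq_div_iff (by positivity)]
  field_simp

lemma gg_integral (a b : ℕ) : ∫ z : ℂ, gg a b z = Ival a b := by
  rw [Ival, ← Complex.integral_comp_polarCoord_symm (gg a b)]
  have heq : EqOn (fun p : ℝ × ℝ => p.1 • gg a b (Complex.polarCoord.symm p))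
      (fun p : ℝ × ℝ => ((p.1 ^ (a + b + 1) * Real.exp (-Real.pi * p.1 ^ 2) : ℝ) : ℂ)
        * Complex.exp (((a : ℂ) - b) * p.2 * Complex.I)) polarCoord.target := by
    intro p hp
    rw [polarCoord_target] at hp
    exact polar_point a b p hp.1
  rw [setIntegral_congr_fun polarCoord.open_target.measurableSet heq, polarCoord_target,
    Measure.volume_eq_prod,
    setIntegral_prod_mul (fun ρ : ℝ => ((ρ ^ (a + b + 1) * Real.exp (-Real.pi * ρ ^ 2) : ℝ) : ℂ))
      (fun θ : ℝ => Complex.exp (((a : ℂ) - b) * θ * Complex.I)) _ _,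
    angular]
  rw [show (∫ x in Ioi (0:ℝ), ((x ^ (a + b + 1) * Real.exp (-Real.pi * x ^ 2) : ℝ) : ℂ))
      = ((∫ x in Ioi (0:ℝ), x ^ (a + b + 1) * Real.exp (-Real.pi * x ^ 2) : ℝ) : ℂ) from
    integral_ofReal]
  rcases eq_or_ne a b with h | h
  · subst h
    rw [if_pos rfl, if_pos rfl, show a + a + 1 = 2 * a + 1 by ring, radial]
    push_cast
    have h1 : (Real.pi : ℂ) ≠ 0 := by exact_mod_cast Real.pi_ne_zero
    field_simp
    ring
  · rw [if_neg h, if_neg h, mul_zero]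

/-- The four-fold product term. -/
def TT (a₀ b₀ a₁ b₁ a₂ b₂ a₃ b₃ : ℕ) : (Fin 4 → ℂ) → ℂ := fun z =>
  gg a₀ b₀ (z 0) * gg a₁ b₁ (z 1) * gg a₂ b₂ (z 2) * gg a₃ b₃ (z 3)

lemma TT_eq_prod (a₀ b₀ a₁ b₁ a₂ b₂ a₃ b₃ : ℕ) :
    TT a₀ b₀ a₁ b₁ a₂ b₂ a₃ b₃
      = fun z : Fin 4 → ℂ =>
        ∏ i, ![gg a₀ b₀, gg a₁ b₁, gg a₂ b₂, gg a₃ b₃] i (z i) := by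
  funext z
  rw [show (∏ i, ![gg a₀ b₀, gg a₁ b₁, gg a₂ b₂, gg a₃ b₃] i (z i))
      = ∏ i, (fun i : Fin 4 => ![gg a₀ b₀, gg a₁ b₁, gg a₂ b₂, gg a₃ b₃] i (z i)) i from rfl,
    Fin.prod_univ_four]
  simp [TT]

lemma TT_integrable (a₀ b₀ a₁ b₁ a₂ b₂ a₃ b₃ : ℕ) :
    Integrable (TT a₀ b₀ a₁ b₁ a₂ b₂ a₃ b₃) := by
  rw [TT_eq_prod]
  exact Integrable.fintype_prod (fun i => by fin_cases i <;> exact gg_integrable _ _)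

lemma TT_integral (a₀ b₀ a₁ b₁ a₂ b₂ a₃ b₃ : ℕ) :
    ∫ z : Fin 4 → ℂ, TT a₀ b₀ a₁ b₁ a₂ b₂ a₃ b₃ z
      = Ival a₀ b₀ * Ival a₁ b₁ * Ival a₂ b₂ * Ival a₃ b₃ := by
  rw [show (fun z : Fin 4 → ℂ => TT a₀ b₀ a₁ b₁ a₂ b₂ a₃ b₃ z)
      = TT a₀ b₀ a₁ b₁ a₂ b₂ a₃ b₃ from rfl, TT_eq_prod,
    MeasureTheory.volume_pi, MeasureTheory.integral_fintype_prod_eq_prod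
      (fun i => ![gg a₀ b₀, gg a₁ b₁, gg a₂ b₂, gg a₃ b₃] i), Fin.prod_univ_four]
  simp [gg_integral]

lemma natkey (r m : ℕ) :
    (∑ j ∈ range (m+1), (m.choose j)^2 * (r+j).factorial * ((m-j).factorial)^2 * j.factorial)
      * (r+1) = m.factorial * (r+m+1).factorial := by
  have hterm : ∀ j ∈ range (m+1),
      (m.choose j)^2 * (r+j).factorial * ((m-j).factorial)^2 * j.factorial
        = m.factorial ^ 2 * r.factorial * (r+j).choose j := by
    intro j hj
    have hj' : j ≤ m := Nat.lt_succ_iff.mp (mem_range.mp hj)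
    have h1 : m.choose j * j.factorial * (m - j).factorial = m.factorial :=
      Nat.choose_mul_factorial_mul_factorial hj'
    have h2 : (r+j).choose j * j.factorial * (r + j - j).factorial = (r+j).factorial :=
      Nat.choose_mul_factorial_mul_factorial (Nat.le_add_left j r)
    rw [Nat.add_sub_cancel] at h2
    rw [← h1, ← h2]; ring
  rw [Finset.sum_congr rfl hterm, ← Finset.mul_sum]
  have hrei : ∑ j ∈ range (m+1), (r+j).choose j = (r+m+1).choose (r+1) := by
    have h3 : ∀ j ∈ range (m+1), (r+j).choose j = (r+j).choose r := by
      intro j _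
      exact (Nat.choose_symm_add).symm
    rw [Finset.sum_congr rfl h3]
    have h4 : ∑ i ∈ Finset.Icc r (r+m), i.choose r = (r+m+1).choose (r+1) :=
      Nat.sum_Icc_choose (r+m) r
    rw [← h4, show Finset.Icc r (r+m)
        = Finset.map ⟨fun j => r + j, add_right_injective r⟩ (range (m+1)) by
      ext x
      simp only [Finset.mem_Icc, Finset.mem_map, Finset.mem_range,
        Function.Embedding.coeFn_mk]
      exact ⟨fun h => ⟨x - r, by omega, by omega⟩, by rintro ⟨a, ha, rfl⟩; omega⟩,
      Finset.sum_map]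
    rfl
  rw [hrei]
  have h5 : (r+m+1).choose (r+1) * (r+1).factorial * ((r+m+1) - (r+1)).factorial
      = (r+m+1).factorial := Nat.choose_mul_factorial_mul_factorial (by omega)
  have h6 : (r+m+1) - (r+1) = m := by omega
  rw [h6] at h5
  have h7 : (r+1).factorial = (r+1) * r.factorial := rfl
  rw [← h5, h7]; ring

lemma expand (r m : ℕ) (z : Fin 4 → ℂ) :
    (((‖(z 0) ^ r * (z 0 * z 3 - z 1 * z 2) ^ m‖) ^ 2 *
        Real.exp (-Real.pi * ((‖z 0‖) ^ 2 + (‖z 1‖) ^ 2 +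
          (‖z 2‖) ^ 2 + (‖z 3‖) ^ 2)) : ℝ) : ℂ)
      = ∑ j ∈ range (m+1), ∑ k ∈ range (m+1),
          (-1:ℂ)^(j+m) * (-1:ℂ)^(k+m) * (m.choose j : ℂ) * (m.choose k : ℂ) *
            TT (r+j) (r+k) (m-j) (m-k) (m-j) (m-k) j k z := by
  set Φ : ℂ := (z 0) ^ r * (z 0 * z 3 - z 1 * z 2) ^ m with hΦ
  have habs : ((‖Φ‖ ^ 2 : ℝ) : ℂ) = Φ * conj Φ := by
    rw [Complex.sq_norm, Complex.mul_conj]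
  have hexp : ((Real.exp (-Real.pi * ((‖z 0‖) ^ 2 + (‖z 1‖) ^ 2 +
        (‖z 2‖) ^ 2 + (‖z 3‖) ^ 2)) : ℝ) : ℂ)
      = ((Real.exp (-Real.pi * ‖z 0‖ ^ 2) : ℝ) : ℂ)
        * ((Real.exp (-Real.pi * ‖z 1‖ ^ 2) : ℝ) : ℂ)
        * ((Real.exp (-Real.pi * ‖z 2‖ ^ 2) : ℝ) : ℂ)
        * ((Real.exp (-Real.pi * ‖z 3‖ ^ 2) : ℝ) : ℂ) := by
    rw [← Complex.ofReal_mul, ← Complex.ofReal_mul, ← Complex.ofReal_mul,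
      ← Real.exp_add, ← Real.exp_add, ← Real.exp_add]
    congr 2
    ring
  rw [Complex.ofReal_mul, habs, hexp, hΦ]
  simp only [map_mul, map_pow, map_sub]
  rw [sub_pow (z 0 * z 3) (z 1 * z 2) m,
    sub_pow ((conj (z 0)) * (conj (z 3))) ((conj (z 1)) * (conj (z 2))) m]
  rw [show ∀ X S1 Y S2 E : ℂ, (X*S1)*(Y*S2)*E = (S1*S2)*(X*Y*E) from fun _ _ _ _ _ => by ring]
  rw [Finset.sum_mul_sum (range (m+1)) (range (m+1))]
  simp only [Finset.sum_mul]
  refine Finset.sum_congr rfl fun j hj => Finset.sum_congr rfl fun k hk => ?_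
  simp only [TT, gg]
  ring

end StmtAux


/-- The squared Fock-space norm of the joint harmonic polynomial
`φ = z₁^r (z₁z₄ − z₂z₃)^m`:
`∫_{ℂ⁴} |z₁^r (z₁z₄ − z₂z₃)^m|² e^{−π(|z₁|²+|z₂|²+|z₃|²+|z₄|²)} dz
  = m!(r+m+1)!/((r+1)π^{r+2m})`. -/
theorem stmt_6 (r m : ℕ) :
    ∫ z : Fin 4 → ℂ,
        ‖(z 0) ^ r * (z 0 * z 3 - z 1 * z 2) ^ m‖ ^ 2 *
          Real.exp (-Real.pi * (‖z 0‖ ^ 2 + ‖z 1‖ ^ 2 +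
            ‖z 2‖ ^ 2 + ‖z 3‖ ^ 2))
      = (m.factorial : ℝ) * ((r + m + 1).factorial : ℝ) /
          (((r : ℝ) + 1) * Real.pi ^ (r + 2 * m)) := by
  have hπ : (Real.pi : ℂ) ≠ 0 := by exact_mod_cast Real.pi_ne_zero
  have hIv : ∀ a : ℕ, Ival a a = (a.factorial : ℂ) / (Real.pi : ℂ) ^ a := fun a => if_pos rfl
  apply Complex.ofReal_injective
  rw [show ((∫ z : Fin 4 → ℂ,
        (‖(z 0) ^ r * (z 0 * z 3 - z 1 * z 2) ^ m‖) ^ 2 *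
          Real.exp (-Real.pi * ((‖z 0‖) ^ 2 + (‖z 1‖) ^ 2 +
            (‖z 2‖) ^ 2 + (‖z 3‖) ^ 2)) : ℝ) : ℂ)
      = ∫ z : Fin 4 → ℂ,
        (((‖(z 0) ^ r * (z 0 * z 3 - z 1 * z 2) ^ m‖) ^ 2 *
          Real.exp (-Real.pi * ((‖z 0‖) ^ 2 + (‖z 1‖) ^ 2 +
            (‖z 2‖) ^ 2 + (‖z 3‖) ^ 2)) : ℝ) : ℂ) from
    integral_ofReal.symm]
  calc (∫ z : Fin 4 → ℂ,
        (((‖(z 0) ^ r * (z 0 * z 3 - z 1 * z 2) ^ m‖) ^ 2 *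
          Real.exp (-Real.pi * ((‖z 0‖) ^ 2 + (‖z 1‖) ^ 2 +
            (‖z 2‖) ^ 2 + (‖z 3‖) ^ 2)) : ℝ) : ℂ))
      = ∫ z : Fin 4 → ℂ, ∑ j ∈ range (m+1), ∑ k ∈ range (m+1),
          (-1:ℂ)^(j+m) * (-1:ℂ)^(k+m) * (m.choose j : ℂ) * (m.choose k : ℂ) *
            TT (r+j) (r+k) (m-j) (m-k) (m-j) (m-k) j k z :=
        integral_congr_ae (Filter.Eventually.of_forall fun z => expand r m z)
    _ = ∑ j ∈ range (m+1), ∑ k ∈ range (m+1),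
          (-1:ℂ)^(j+m) * (-1:ℂ)^(k+m) * (m.choose j : ℂ) * (m.choose k : ℂ) *
            ∫ z : Fin 4 → ℂ, TT (r+j) (r+k) (m-j) (m-k) (m-j) (m-k) j k z := by
        rw [integral_finset_sum _ (fun j _ => integrable_finset_sum _
          (fun k _ => (TT_integrable _ _ _ _ _ _ _ _).const_mul _))]
        refine Finset.sum_congr rfl fun j _ => ?_
        rw [integral_finset_sum _ (fun k _ => (TT_integrable _ _ _ _ _ _ _ _).const_mul _)]
        exact Finset.sum_congr rfl fun k _ => integral_const_mul _ _
    _ = ∑ j ∈ range (m+1), ∑ k ∈ range (m+1),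
          (-1:ℂ)^(j+m) * (-1:ℂ)^(k+m) * (m.choose j : ℂ) * (m.choose k : ℂ) *
            (Ival (r+j) (r+k) * Ival (m-j) (m-k) * Ival (m-j) (m-k) * Ival j k) := by
        simp_rw [TT_integral]
    _ = ∑ j ∈ range (m+1), (m.choose j : ℂ)^2 *
          (Ival (r+j) (r+j) * Ival (m-j) (m-j) * Ival (m-j) (m-j) * Ival j j) := by
        refine Finset.sum_congr rfl fun j hj => ?_
        rw [Finset.sum_eq_single_of_mem j hj (fun k _ hkj => by
          have h0 : Ival j k = 0 := by rw [Ival, if_neg (fun h => hkj h.symm)]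
          rw [h0, mul_zero, mul_zero])]
        have hsign : (-1:ℂ)^(j+m) * (-1:ℂ)^(j+m) = 1 := by
          rw [← pow_add]; exact Even.neg_one_pow ⟨j+m, rfl⟩
        linear_combination ((m.choose j : ℂ))^2 *
          (Ival (r+j) (r+j) * Ival (m-j) (m-j) * Ival (m-j) (m-j) * Ival j j) * hsign
    _ = ∑ j ∈ range (m+1),
          (((m.choose j)^2 * (r+j).factorial * ((m-j).factorial)^2 * j.factorial : ℕ) : ℂ)
            / (Real.pi : ℂ)^(r+2*m) := by
        refine Finset.sum_congr rfl fun j hj => ?_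
        have hj' : j ≤ m := Nat.lt_succ_iff.mp (mem_range.mp hj)
        simp only [hIv]
        have hpow : (Real.pi:ℂ)^(r+j) * (Real.pi:ℂ)^(m-j) * (Real.pi:ℂ)^(m-j) * (Real.pi:ℂ)^j
            = (Real.pi:ℂ)^(r+2*m) := by
          rw [← pow_add, ← pow_add, ← pow_add]; congr 1; omega
        push_cast
        rw [div_mul_div_comm, div_mul_div_comm, div_mul_div_comm, mul_div_assoc]
        rw [hpow]
        ring
    _ = ((m.factorial : ℝ) * ((r + m + 1).factorial : ℝ) /
          (((r : ℝ) + 1) * Real.pi ^ (r + 2 * m)) : ℝ) := by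
        rw [← Finset.sum_div]
        have hkC : ((∑ j ∈ range (m+1),
            (m.choose j)^2 * (r+j).factorial * ((m-j).factorial)^2 * j.factorial : ℕ) : ℂ)
              * ((r : ℂ) + 1) = (m.factorial : ℂ) * ((r+m+1).factorial : ℂ) := by
          exact_mod_cast congrArg (Nat.cast : ℕ → ℂ) (natkey r m)
        push_cast
        push_cast at hkC
        rw [div_eq_div_iff (pow_ne_zero _ hπ)
          (mul_ne_zero (Nat.cast_add_one_ne_zero r) (pow_ne_zero _ hπ))]
        linear_combination ((Real.pi : ℂ)^(r+2*m)) * hkC
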